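/- Let α, γ, δ be real constants and β > 0, and on (0,∞) define B = 1, C = 0, E(x) = γ/(x+β), G(x) = x/(x+β), M(x) = δ + (αγ + βδ − γ²/β)/x + γ²/(β(x+β)), N(x) = −γ/(x+β) + α. Then these functions satisfy E′ = MC − EG, M′ = E² + MG − BM − EN, G′ = GB + NC − CE − G², N′ = GE − CM on (0,∞), where F′ denotes x·(dF/dx). Moreover E + N = α identically. -/

import Mathlib

/-- The explicit functions (52) of the paper, with `B = 1, C = 0`,
solve the central system (49) on `(0,∞)` (where `F′` denotes `x·dF/dx`), and
the first integral takes the value `E + N = α`. -/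
theorem stmt_8 (α γ δ : ℝ) (β : ℝ) (hβ : 0 < β) (B C E G M N : ℝ → ℝ)
    (hB : B = fun _ => (1:ℝ)) (hC : C = fun _ => (0:ℝ))
    (hE : E = fun x => γ / (x + β))
    (hG : G = fun x => x / (x + β))
    (hM : M = fun x => δ + (α * γ + β * δ - γ ^ 2 / β) / x + γ ^ 2 / (β * (x + β)))
    (hN : N = fun x => -γ / (x + β) + α) :
    ∀ x, 0 < x →
      (x * deriv E x = M x * C x - E x * G x ∧
       x * deriv M x = E x ^ 2 + M x * G x - B x * M x - E x * N x ∧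
       x * deriv G x = G x * B x + N x * C x - C x * E x - G x ^ 2 ∧
       x * deriv N x = G x * E x - C x * M x) ∧
      E x + N x = α := by
  intro x hx
  have hxβ : x + β ≠ 0 := by positivity
  have hx0 : x ≠ 0 := ne_of_gt hx
  have hβ0 : β ≠ 0 := ne_of_gt hβ
  have hid : HasDerivAt (fun y : ℝ => y + β) 1 x := by
    simpa using (hasDerivAt_id x).add_const β
  have hEd : HasDerivAt E (-γ / (x + β) ^ 2) x := by
    subst hE
    simpa [div_eq_mul_inv, neg_div] using
      ((hid.inv hxβ).const_mul γ)
  have hGd : HasDerivAt G (β / (x + β) ^ 2) x := by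
    subst hG
    have := (hasDerivAt_id x).div hid hxβ
    refine this.congr_deriv ?_
    simp only [id]; ring
  have hNd : HasDerivAt N (γ / (x + β) ^ 2) x := by
    subst hN
    have : HasDerivAt (fun y : ℝ => -γ / (y + β)) (γ / (x + β) ^ 2) x := by
      simpa [div_eq_mul_inv, neg_mul, neg_neg] using ((hid.inv hxβ).const_mul (-γ))
    simpa using this.add_const α
  have hMd : HasDerivAt M (-(α * γ + β * δ - γ ^ 2 / β) / x ^ 2
      - γ ^ 2 / (β * (x + β) ^ 2)) x := by
    subst hM
    have h1 : HasDerivAt (fun y : ℝ => (α * γ + β * δ - γ ^ 2 / β) / y)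
        (-(α * γ + β * δ - γ ^ 2 / β) / x ^ 2) x := by
      have := ((hasDerivAt_id x).inv hx0).const_mul (α * γ + β * δ - γ ^ 2 / β)
      refine this.congr_deriv ?_
      simp only [id]; ring
    have h2 : HasDerivAt (fun y : ℝ => γ ^ 2 / (β * (y + β)))
        (-(γ ^ 2) / (β * (x + β) ^ 2)) x := by
      have hb : HasDerivAt (fun y : ℝ => β * (y + β)) β x := by
        simpa using hid.const_mul β
      have hne : β * (x + β) ≠ 0 := mul_ne_zero hβ0 hxβ
      have := (hb.inv hne).const_mul (γ ^ 2)
      refine this.congr_deriv ?_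
      field_simp
    have := ((hasDerivAt_const x δ).add h1).add h2
    refine this.congr_deriv ?_
    field_simp
    ring
  refine ⟨⟨?_, ?_, ?_, ?_⟩, ?_⟩
  · rw [hEd.deriv]; subst hE hG hM hC; field_simp; ring
  · rw [hMd.deriv]; subst hE hG hM hN hB; field_simp; ring
  · rw [hGd.deriv]; subst hE hG hN hB hC; field_simp; ring
  · rw [hNd.deriv]; subst hE hG hM hC; field_simp; ring
  · subst hE hN; field_simp; ring
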